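/- Let X be a real vector space, M ⊆ X a nonempty affine subspace, S a generalized semispace generated by M, and a ∈ M. Then S = {a + t(x − a) : x ∈ S, t > 0}. -/

import Mathlib

/-- `S` is a generalized semispace generated by the set `M`: a convex set disjoint from `M`
that is maximal with respect to inclusion among convex subsets disjoint from `M`. -/
def IsGenSemispace {X : Type*} [AddCommGroup X] [Module ℝ X] (M S : Set X) : Prop :=
  Convex ℝ S ∧ S ∩ M = ∅ ∧
    ∀ C : Set X, Convex ℝ C → C ∩ M = ∅ → S ⊆ C → C = S

theorem genSemispace_eq_cone_from_point {X : Type*} [AddCommGroup X] [Module ℝ X]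
    (M : AffineSubspace ℝ X) (hM : (M : Set X).Nonempty)
    (S : Set X) (hS : IsGenSemispace (M : Set X) S)
    (a : X) (ha : a ∈ M) :
    S = {z : X | ∃ x ∈ S, ∃ t : ℝ, 0 < t ∧ z = a + t • (x - a)} := by
  obtain ⟨hconv, hdisj, hmax⟩ := hS
  set C : Set X := {z : X | ∃ x ∈ S, ∃ t : ℝ, 0 < t ∧ z = a + t • (x - a)} with hC
  have hsub : S ⊆ C := fun x hx => ⟨x, hx, 1, one_pos, by simp⟩
  -- C is convex
  have hCconv : Convex ℝ C := by
    rintro z ⟨x, hx, t, ht, rfl⟩ w ⟨y, hy, s, hs, rfl⟩ p q hp hq hpq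
    set r : ℝ := p * t + q * s with hr
    have hrpos : 0 < r := by
      rcases hp.lt_or_eq with hp' | hp'
      · have : 0 < p * t := mul_pos hp' ht
        nlinarith [mul_nonneg hq hs.le]
      · have hq' : 0 < q := by nlinarith
        have : 0 < q * s := mul_pos hq' hs
        nlinarith [mul_nonneg hp ht.le]
    refine ⟨(p * t / r) • x + (q * s / r) • y, ?_, r, hrpos, ?_⟩
    · exact hconv hx hy (by positivity) (by positivity)
        (by field_simp; linarith)
    · have hrne : r ≠ 0 := hrpos.ne'
      match_scalars <;> field_simp <;> linarith
  -- C is disjoint from M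
  have hCdisj : C ∩ (M : Set X) = ∅ := by
    rw [Set.eq_empty_iff_forall_notMem]
    rintro z ⟨⟨x, hx, t, ht, rfl⟩, hzM⟩
    have hxM : x ∈ M := by
      have := M.smul_vsub_vadd_mem (1 / t) hzM ha ha
      have hx' : (1 / t) • (a + t • (x - a) -ᵥ a) +ᵥ a = x := by
        simp only [vsub_eq_sub, vadd_eq_add, add_sub_cancel_left, smul_smul]
        rw [one_div, inv_mul_cancel₀ ht.ne', one_smul]
        abel
      rwa [hx'] at this
    have : x ∈ S ∩ (M : Set X) := ⟨hx, hxM⟩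
    rw [hdisj] at this
    exact this
  exact (hmax C hCconv hCdisj hsub).symm
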